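/- Let j ≥ 2 be an integer and let s ∈ ℝ satisfy −j + 1/2 ≤ s ≤ −j/2. There exists a constant C > 0 depending only on j and s such that for every λ ≥ 1 and every nonnegative measurable f : Ż_λ × ℝ → [0,∞], the Z^s norm of f is at most C times the X^{s,(2j−1)/(2j)} norm of f. -/

import Mathlib

open MeasureTheory
open scoped ENNReal

noncomputable section

/-- Japanese bracket `⟨x⟩ = (1+x²)^{1/2}`. -/
def jap (x : ℝ) : ℝ := Real.sqrt (1 + x ^ 2)

/-- Modulation `σ = τ − k^{2j+1}` at the frequency `k = m/λ ∈ Ż_λ`. -/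
def sigL (j : ℕ) (lam : ℝ) (m : ℤ) (τ : ℝ) : ℝ := τ - ((m : ℝ) / lam) ^ (2 * j + 1)

/-- Convolution on `Ż_λ × ℝ` (frequencies indexed by `m ∈ ℤ∖{0}`, `k = m/λ`):
`(f∗g)(k,τ) = (1/λ)Σ_{k₁≠0, k−k₁≠0} ∫ f(k₁,τ₁) g(k−k₁,τ−τ₁) dτ₁`. -/
def convL (lam : ℝ) (f g : ℤ → ℝ → ℝ≥0∞) (m : ℤ) (τ : ℝ) : ℝ≥0∞ :=
  ENNReal.ofReal (1 / lam) *
    ∑' m₁ : ℤ, if m₁ ≠ 0 ∧ m - m₁ ≠ 0 then ∫⁻ τ₁, f m₁ τ₁ * g (m - m₁) (τ - τ₁) else 0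

/-- `L²_λ` norm: `((1/λ) Σ_k ∫ f(k,τ)² dτ)^{1/2}`. -/
def L2L (lam : ℝ) (f : ℤ → ℝ → ℝ≥0∞) : ℝ≥0∞ :=
  (ENNReal.ofReal (1 / lam) * ∑' m : ℤ, ∫⁻ τ, (f m τ) ^ 2) ^ (1 / 2 : ℝ)

/-- `X^{s,b}` norm: the `L²_λ` norm of `⟨k⟩^s ⟨σ⟩^b f(k,τ)`. -/
def Xn (j : ℕ) (lam s b : ℝ) (f : ℤ → ℝ → ℝ≥0∞) : ℝ≥0∞ :=
  L2L lam (fun m τ =>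
    ENNReal.ofReal (jap ((m : ℝ) / lam) ^ s * jap (sigL j lam m τ) ^ b) * f m τ)

/-- `Y^s` norm: `((1/λ) Σ_k ⟨k⟩^{2s} (∫ f(k,τ) dτ)²)^{1/2}`. -/
def Yn (lam s : ℝ) (f : ℤ → ℝ → ℝ≥0∞) : ℝ≥0∞ :=
  (ENNReal.ofReal (1 / lam) *
    ∑' m : ℤ, ENNReal.ofReal (jap ((m : ℝ) / lam) ^ (2 * s)) * (∫⁻ τ, f m τ) ^ 2) ^
    (1 / 2 : ℝ)

/-- `D₁ = {(k,τ): |k| ≥ 1, |σ| ≤ (2(2j+1)/3)|k|^{2j}}`. -/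
def D1 (j : ℕ) (lam : ℝ) : Set (ℤ × ℝ) :=
  {p | 1 ≤ |(p.1 : ℝ) / lam| ∧
    |sigL j lam p.1 p.2| ≤ 2 * (2 * (j : ℝ) + 1) / 3 * |(p.1 : ℝ) / lam| ^ (2 * j)}

/-- `D₂ = {(k,τ): |k| ≥ 1, (2(2j+1)/3)|k|^{2j} < |σ| ≤ 2(2j+1)|k|^{2j+1}}`. -/
def D2 (j : ℕ) (lam : ℝ) : Set (ℤ × ℝ) :=
  {p | 1 ≤ |(p.1 : ℝ) / lam| ∧
    2 * (2 * (j : ℝ) + 1) / 3 * |(p.1 : ℝ) / lam| ^ (2 * j) < |sigL j lam p.1 p.2| ∧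
    |sigL j lam p.1 p.2| ≤ 2 * (2 * (j : ℝ) + 1) * |(p.1 : ℝ) / lam| ^ (2 * j + 1)}

/-- `D₃ = {(k,τ): |k| ≥ 1, |σ| > 2(2j+1)|k|^{2j+1}}`. -/
def D3 (j : ℕ) (lam : ℝ) : Set (ℤ × ℝ) :=
  {p | 1 ≤ |(p.1 : ℝ) / lam| ∧
    2 * (2 * (j : ℝ) + 1) * |(p.1 : ℝ) / lam| ^ (2 * j + 1) < |sigL j lam p.1 p.2|}

/-- `D₄ = {(k,τ): 1/λ ≤ |k| ≤ 1, |σ| > 2(2j+1)|k|^{2j+1}}`. -/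
def D4 (j : ℕ) (lam : ℝ) : Set (ℤ × ℝ) :=
  {p | 1 / lam ≤ |(p.1 : ℝ) / lam| ∧ |(p.1 : ℝ) / lam| ≤ 1 ∧
    2 * (2 * (j : ℝ) + 1) * |(p.1 : ℝ) / lam| ^ (2 * j + 1) < |sigL j lam p.1 p.2|}

/-- `D₅ = {(k,τ): 1/λ ≤ |k| ≤ 1, |σ| ≤ 2(2j+1)|k|^{2j+1}}`. -/
def D5 (j : ℕ) (lam : ℝ) : Set (ℤ × ℝ) :=
  {p | 1 / lam ≤ |(p.1 : ℝ) / lam| ∧ |(p.1 : ℝ) / lam| ≤ 1 ∧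
    |sigL j lam p.1 p.2| ≤ 2 * (2 * (j : ℝ) + 1) * |(p.1 : ℝ) / lam| ^ (2 * j + 1)}

/-- Restriction `1_D f` of `f` to a region `D`. -/
def restr (D : Set (ℤ × ℝ)) (f : ℤ → ℝ → ℝ≥0∞) : ℤ → ℝ → ℝ≥0∞ :=
  fun m τ => Set.indicator D (fun p => f p.1 p.2) (m, τ)

/-- `X^s` norm: `‖1_{D₁∪D₅}f‖_{X^{s,(2j−1)/(2j)}} + ‖1_{D₂}f‖_{X^{(1−2j)s−1,s+1}}
  + ‖1_{D₃∪D₄}f‖_{X^{−s/j−1,s/j+1}}`. -/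
def XSn (j : ℕ) (lam s : ℝ) (f : ℤ → ℝ → ℝ≥0∞) : ℝ≥0∞ :=
  Xn j lam s ((2 * (j : ℝ) - 1) / (2 * (j : ℝ))) (restr (D1 j lam ∪ D5 j lam) f)
  + Xn j lam ((1 - 2 * (j : ℝ)) * s - 1) (s + 1) (restr (D2 j lam) f)
  + Xn j lam (-s / (j : ℝ) - 1) (s / (j : ℝ) + 1) (restr (D3 j lam ∪ D4 j lam) f)

/-- `Z^s` norm: `X^s` norm plus `Y^s` norm. -/
def Zn (j : ℕ) (lam s : ℝ) (f : ℤ → ℝ → ℝ≥0∞) : ℝ≥0∞ :=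
  XSn j lam s f + Yn lam s f

/- ===== auxiliary lemmas ===== -/

lemma jap_pos (x : ℝ) : 0 < jap x := Real.sqrt_pos.2 (by positivity)

lemma one_le_jap (x : ℝ) : 1 ≤ jap x := by
  have : Real.sqrt 1 ≤ jap x := Real.sqrt_le_sqrt (by nlinarith [sq_nonneg x])
  simpa using this

lemma abs_le_jap (x : ℝ) : |x| ≤ jap x := by
  have : Real.sqrt (x ^ 2) ≤ jap x := Real.sqrt_le_sqrt (by linarith)
  simpa [Real.sqrt_sq_eq_abs] using this

lemma jap_le_sqrt_two_mul {x : ℝ} (hx : 1 ≤ |x|) : jap x ≤ Real.sqrt 2 * |x| := by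
  have h2 : (1:ℝ) ≤ x ^ 2 := by nlinarith [abs_nonneg x, sq_abs x]
  calc jap x ≤ Real.sqrt (2 * x ^ 2) := Real.sqrt_le_sqrt (by nlinarith)
    _ = Real.sqrt 2 * |x| := by
        rw [Real.sqrt_mul (by norm_num), Real.sqrt_sq_eq_abs]

lemma jap_le_sqrt_two {x : ℝ} (hx : |x| ≤ 1) : jap x ≤ Real.sqrt 2 := by
  have h2 : x ^ 2 ≤ 1 := by nlinarith [abs_nonneg x, sq_abs x]
  exact Real.sqrt_le_sqrt (by nlinarith)

lemma sqrt_two_rpow (t : ℝ) : (Real.sqrt 2) ^ t = (2:ℝ) ^ (t / 2) := by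
  rw [Real.sqrt_eq_rpow, ← Real.rpow_mul (by norm_num)]
  ring_nf

/-- Generic weight trade on `D₂`/`D₃`-type regions. -/
lemma weight_trade {u v a e p s b : ℝ} (hu : 1 ≤ u) (hv1 : 0 < v)
    (hv : (u / Real.sqrt 2) ^ a ≤ v) (he : e ≤ 0) (hps : p + a * e ≤ s) :
    u ^ p * v ^ (b + e) ≤ (2:ℝ) ^ (-(a * e) / 2) * (u ^ s * v ^ b) := by
  have hu0 : (0:ℝ) < u := lt_of_lt_of_le one_pos hu
  have hs2 : (0:ℝ) < Real.sqrt 2 := by positivity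
  have hq : (0:ℝ) < u / Real.sqrt 2 := by positivity
  have hqa : (0:ℝ) < (u / Real.sqrt 2) ^ a := Real.rpow_pos_of_pos hq a
  have h1 : v ^ e ≤ ((u / Real.sqrt 2) ^ a) ^ e :=
    Real.rpow_le_rpow_of_nonpos hqa hv he
  have h2 : ((u / Real.sqrt 2) ^ a) ^ e
      = u ^ (a * e) * (2:ℝ) ^ (-(a * e) / 2) := by
    rw [← Real.rpow_mul hq.le, Real.div_rpow hu0.le hs2.le, div_eq_mul_inv,
      ← Real.rpow_neg hs2.le, sqrt_two_rpow]
  have h3 : u ^ p * u ^ (a * e) ≤ u ^ s := by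
    rw [← Real.rpow_add hu0]
    exact Real.rpow_le_rpow_of_exponent_le hu hps
  have hb : v ^ (b + e) = v ^ b * v ^ e := Real.rpow_add hv1 _ _
  have hup : (0:ℝ) < u ^ p := Real.rpow_pos_of_pos hu0 _
  have hvb : (0:ℝ) < v ^ b := Real.rpow_pos_of_pos hv1 _
  have h4 : v ^ e ≤ u ^ (a * e) * (2:ℝ) ^ (-(a * e) / 2) := h2 ▸ h1
  calc u ^ p * v ^ (b + e) = (u ^ p * v ^ e) * v ^ b := by rw [hb]; ring
    _ ≤ (u ^ p * (u ^ (a * e) * (2:ℝ) ^ (-(a * e) / 2))) * v ^ b := by gcongr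
    _ = (2:ℝ) ^ (-(a * e) / 2) * ((u ^ p * u ^ (a * e)) * v ^ b) := by ring
    _ ≤ (2:ℝ) ^ (-(a * e) / 2) * (u ^ s * v ^ b) := by
        have h2p : (0:ℝ) < (2:ℝ) ^ (-(a * e) / 2) := Real.rpow_pos_of_pos (by norm_num) _
        gcongr

/-- Generic weight trade on `D₄`-type regions. -/
lemma weight_trade4 {u v p q s b : ℝ} (hu1 : 1 ≤ u) (hu2 : u ≤ Real.sqrt 2)
    (hv : 1 ≤ v) (hp : p ≤ 0) (hq : q ≤ b) (hs : s ≤ 0) :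
    u ^ p * v ^ q ≤ (2:ℝ) ^ (-s / 2) * (u ^ s * v ^ b) := by
  have hu0 : (0:ℝ) < u := lt_of_lt_of_le one_pos hu1
  have hs2 : (0:ℝ) < Real.sqrt 2 := by positivity
  have h1 : u ^ p ≤ 1 := Real.rpow_le_one_of_one_le_of_nonpos hu1 hp
  have h2 : v ^ q ≤ v ^ b := Real.rpow_le_rpow_of_exponent_le hv hq
  have h3 : (Real.sqrt 2) ^ s ≤ u ^ s := Real.rpow_le_rpow_of_nonpos hu0 hu2 hs
  have h4 : (1:ℝ) ≤ (2:ℝ) ^ (-s / 2) * u ^ s := by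
    have heq : (2:ℝ) ^ (-s / 2) * (Real.sqrt 2) ^ s = 1 := by
      rw [sqrt_two_rpow, ← Real.rpow_add (by norm_num),
        show -s/2 + s/2 = 0 by ring, Real.rpow_zero]
    calc (1:ℝ) = (2:ℝ) ^ (-s / 2) * (Real.sqrt 2) ^ s := heq.symm
      _ ≤ (2:ℝ) ^ (-s / 2) * u ^ s := by
          have h2p : (0:ℝ) < (2:ℝ) ^ (-s / 2) := Real.rpow_pos_of_pos (by norm_num) _
          gcongr
  have hvb : (0:ℝ) ≤ v ^ b := (Real.rpow_pos_of_pos (lt_of_lt_of_le one_pos hv) _).le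
  have hvq : (0:ℝ) ≤ v ^ q := (Real.rpow_pos_of_pos (lt_of_lt_of_le one_pos hv) _).le
  calc u ^ p * v ^ q ≤ 1 * v ^ b := by gcongr
    _ = v ^ b := one_mul _
    _ ≤ ((2:ℝ) ^ (-s / 2) * u ^ s) * v ^ b := le_mul_of_one_le_left hvb h4
    _ = (2:ℝ) ^ (-s / 2) * (u ^ s * v ^ b) := by ring

lemma sq_rpow_half (z : ℝ≥0∞) : (z ^ 2) ^ (1/2 : ℝ) = z := by
  rw [← ENNReal.rpow_natCast z 2, ← ENNReal.rpow_mul]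
  norm_num

lemma rpow_half_sq (z : ℝ≥0∞) : (z ^ (1/2 : ℝ)) ^ 2 = z := by
  rw [← ENNReal.rpow_natCast (z ^ (1/2:ℝ)) 2, ← ENNReal.rpow_mul]
  norm_num

lemma L2L_le_mul {lam : ℝ} {F G : ℤ → ℝ → ℝ≥0∞} {c : ℝ≥0∞} (hc : c ≠ ⊤)
    (h : ∀ m τ, F m τ ≤ c * G m τ) : L2L lam F ≤ c * L2L lam G := by
  unfold L2L
  have step : ENNReal.ofReal (1 / lam) * ∑' m : ℤ, ∫⁻ τ, (F m τ) ^ 2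
      ≤ c ^ 2 * (ENNReal.ofReal (1 / lam) * ∑' m : ℤ, ∫⁻ τ, (G m τ) ^ 2) := by
    have hsum : ∑' m : ℤ, ∫⁻ τ, (F m τ) ^ 2
        ≤ c ^ 2 * ∑' m : ℤ, ∫⁻ τ, (G m τ) ^ 2 := by
      rw [← ENNReal.tsum_mul_left]
      refine ENNReal.tsum_le_tsum fun m => ?_
      rw [← lintegral_const_mul' _ _ (ENNReal.pow_ne_top hc)]
      refine lintegral_mono fun τ => ?_
      calc F m τ ^ 2 ≤ (c * G m τ) ^ 2 := pow_le_pow_left' (h m τ) 2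
        _ = c ^ 2 * G m τ ^ 2 := mul_pow _ _ _
    calc ENNReal.ofReal (1 / lam) * ∑' m : ℤ, ∫⁻ τ, (F m τ) ^ 2
        ≤ ENNReal.ofReal (1 / lam) * (c ^ 2 * ∑' m : ℤ, ∫⁻ τ, (G m τ) ^ 2) :=
          mul_le_mul_right hsum _
      _ = c ^ 2 * (ENNReal.ofReal (1 / lam) * ∑' m : ℤ, ∫⁻ τ, (G m τ) ^ 2) :=
          mul_left_comm _ _ _
  calc (ENNReal.ofReal (1 / lam) * ∑' m : ℤ, ∫⁻ τ, (F m τ) ^ 2) ^ (1/2 : ℝ)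
      ≤ (c ^ 2 * (ENNReal.ofReal (1 / lam) * ∑' m : ℤ, ∫⁻ τ, (G m τ) ^ 2)) ^ (1/2 : ℝ) :=
        ENNReal.rpow_le_rpow step (by norm_num)
    _ = c * (ENNReal.ofReal (1 / lam) * ∑' m : ℤ, ∫⁻ τ, (G m τ) ^ 2) ^ (1/2 : ℝ) := by
        rw [ENNReal.mul_rpow_of_nonneg _ _ (by norm_num : (0:ℝ) ≤ 1/2), sq_rpow_half]

/-- Restricted `Xn` bound from a pointwise weight comparison on `D`. -/
lemma Xn_restr_le (j : ℕ) (lam : ℝ) {s1 b1 s2 b2 C : ℝ} (hC : 0 ≤ C)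
    (D : Set (ℤ × ℝ)) (f : ℤ → ℝ → ℝ≥0∞)
    (hw : ∀ m : ℤ, ∀ τ : ℝ, (m, τ) ∈ D →
      jap ((m : ℝ) / lam) ^ s1 * jap (sigL j lam m τ) ^ b1
        ≤ C * (jap ((m : ℝ) / lam) ^ s2 * jap (sigL j lam m τ) ^ b2)) :
    Xn j lam s1 b1 (restr D f) ≤ ENNReal.ofReal C * Xn j lam s2 b2 f := by
  unfold Xn
  refine L2L_le_mul ENNReal.ofReal_ne_top fun m τ => ?_
  by_cases hD : (m, τ) ∈ D
  · have hr : restr D f m τ = f m τ := Set.indicator_of_mem hD _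
    rw [hr, ← mul_assoc, ← ENNReal.ofReal_mul hC]
    exact mul_le_mul_left (ENNReal.ofReal_le_ofReal (hw m τ hD)) _
  · have hr : restr D f m τ = 0 := Set.indicator_of_notMem hD _
    rw [hr, mul_zero]
    exact zero_le

lemma Xn_restr_le_self (j : ℕ) (lam s b : ℝ) (D : Set (ℤ × ℝ)) (f : ℤ → ℝ → ℝ≥0∞) :
    Xn j lam s b (restr D f) ≤ Xn j lam s b f := by
  unfold Xn
  have := L2L_le_mul (lam := lam) (c := (1:ℝ≥0∞)) ENNReal.one_ne_top
    (F := fun m τ => ENNReal.ofReal (jap ((m:ℝ)/lam) ^ s * jap (sigL j lam m τ) ^ b)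
      * restr D f m τ)
    (G := fun m τ => ENNReal.ofReal (jap ((m:ℝ)/lam) ^ s * jap (sigL j lam m τ) ^ b)
      * f m τ) ?_
  · simpa using this
  · intro m τ
    rw [one_mul]
    refine mul_le_mul_right ?_ _
    by_cases hD : (m, τ) ∈ D
    · exact le_of_eq (Set.indicator_of_mem hD fun p => f p.1 p.2)
    · exact le_trans (le_of_eq (Set.indicator_of_notMem hD fun p => f p.1 p.2)) zero_le

lemma integrable34 : Integrable (fun x : ℝ => ((1:ℝ) + x ^ 2) ^ (-(3/4) : ℝ)) := by
  have h := integrable_rpow_neg_one_add_norm_sq (E := ℝ) (μ := volume) (r := 3/2)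
    (by simp [Module.finrank_self]; norm_num)
  have he : (-(3/2)/2 : ℝ) = -(3/4) := by norm_num
  simpa [Real.norm_eq_abs, sq_abs, he] using h

def CI : ℝ := ∫ x : ℝ, ((1:ℝ) + x ^ 2) ^ (-(3/4) : ℝ)

lemma CI_nonneg : 0 ≤ CI := integral_nonneg fun x => Real.rpow_nonneg (by positivity) _

lemma lintegral34_shift (c : ℝ) :
    ∫⁻ τ : ℝ, ENNReal.ofReal (((1:ℝ) + (τ - c) ^ 2) ^ (-(3/4) : ℝ))
      = ENNReal.ofReal CI := by
  rw [lintegral_sub_right_eq_self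
    (fun x => ENNReal.ofReal (((1:ℝ) + x ^ 2) ^ (-(3/4) : ℝ))) c]
  exact (ofReal_integral_eq_lintegral_ofReal integrable34
    (Filter.Eventually.of_forall fun x => Real.rpow_nonneg (by positivity) _)).symm
lemma Yn_le (j : ℕ) (hj : 2 ≤ j) (lam s : ℝ) (f : ℤ → ℝ → ℝ≥0∞)
    (hf : Measurable (Function.uncurry f)) :
    Yn lam s f ≤ ENNReal.ofReal (CI ^ (1/2 : ℝ)) *
      Xn j lam s ((2 * (j : ℝ) - 1) / (2 * (j : ℝ))) f := by
  set b : ℝ := (2 * (j : ℝ) - 1) / (2 * (j : ℝ)) with hbdef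
  have hj2 : (2:ℝ) ≤ (j:ℝ) := by exact_mod_cast hj
  have hjpos : (0:ℝ) < 2 * (j:ℝ) := by linarith
  have hb34 : (3/4 : ℝ) ≤ b := by
    rw [hbdef, le_div_iff₀ hjpos]; nlinarith
  have key : ∀ m : ℤ,
      ENNReal.ofReal (jap ((m:ℝ)/lam) ^ (2*s)) * (∫⁻ τ, f m τ) ^ 2
        ≤ ENNReal.ofReal CI *
          ∫⁻ τ, (ENNReal.ofReal (jap ((m:ℝ)/lam) ^ s * jap (sigL j lam m τ) ^ b)
            * f m τ) ^ 2 := by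
    intro m
    set g : ℝ → ℝ≥0∞ := fun τ => ENNReal.ofReal (jap (sigL j lam m τ) ^ (-b)) with hg
    set h : ℝ → ℝ≥0∞ := fun τ => ENNReal.ofReal (jap (sigL j lam m τ) ^ b) * f m τ
      with hh
    have hjc : Continuous fun τ => jap (sigL j lam m τ) := by unfold jap sigL; fun_prop
    have hjne : ∀ τ, jap (sigL j lam m τ) ≠ 0 := fun τ => (jap_pos _).ne'
    have hgm : Measurable g :=
      ENNReal.measurable_ofReal.comp
        (hjc.rpow_const (fun τ => Or.inl (hjne τ))).measurable
    have hfm : Measurable (f m) := hf.comp measurable_prodMk_left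
    have hhm : Measurable h :=
      (ENNReal.measurable_ofReal.comp
        (hjc.rpow_const (fun τ => Or.inl (hjne τ))).measurable).mul hfm
    have hfgh : ∀ τ, f m τ = g τ * h τ := by
      intro τ
      rw [hg, hh]
      simp only []
      rw [← mul_assoc, ← ENNReal.ofReal_mul (Real.rpow_nonneg (jap_pos _).le _),
        ← Real.rpow_add (jap_pos _), neg_add_cancel, Real.rpow_zero,
        ENNReal.ofReal_one, one_mul]
    have hCS : ∫⁻ τ, f m τ
        ≤ (∫⁻ τ, g τ ^ 2) ^ (1/2 : ℝ) * (∫⁻ τ, h τ ^ 2) ^ (1/2 : ℝ) := by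
      have := ENNReal.lintegral_mul_le_Lp_mul_Lq volume (p := 2) (q := 2)
        ⟨by norm_num, by norm_num, by norm_num⟩ hgm.aemeasurable hhm.aemeasurable
      simp only [Pi.mul_apply, ENNReal.rpow_two] at this
      calc ∫⁻ τ, f m τ = ∫⁻ τ, g τ * h τ := lintegral_congr hfgh
        _ ≤ _ := by simpa using this
    have hsq : (∫⁻ τ, f m τ) ^ 2 ≤ (∫⁻ τ, g τ ^ 2) * (∫⁻ τ, h τ ^ 2) := by
      calc (∫⁻ τ, f m τ) ^ 2
          ≤ ((∫⁻ τ, g τ ^ 2) ^ (1/2:ℝ) * (∫⁻ τ, h τ ^ 2) ^ (1/2:ℝ)) ^ 2 := by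
            rw [sq, sq]; exact mul_le_mul' hCS hCS
        _ = (∫⁻ τ, g τ ^ 2) * (∫⁻ τ, h τ ^ 2) := by
            rw [mul_pow, rpow_half_sq, rpow_half_sq]
    have hA : ∫⁻ τ, g τ ^ 2 ≤ ENNReal.ofReal CI := by
      have hpt : ∀ τ, g τ ^ 2
          ≤ ENNReal.ofReal (((1:ℝ) + (sigL j lam m τ) ^ 2) ^ (-(3/4) : ℝ)) := by
        intro τ
        set σ := sigL j lam m τ
        have h1 : g τ ^ 2 = ENNReal.ofReal ((jap σ ^ (-b)) ^ 2) := by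
          rw [hg]
          simp only []
          rw [← ENNReal.ofReal_pow (Real.rpow_nonneg (jap_pos _).le _)]
        have h2 : (jap σ ^ (-b)) ^ 2 = ((1:ℝ) + σ ^ 2) ^ (-b) := by
          rw [sq, ← Real.rpow_add (jap_pos σ),
            show jap σ = ((1:ℝ) + σ ^ 2) ^ ((1:ℝ)/2) by
              unfold jap; rw [Real.sqrt_eq_rpow],
            ← Real.rpow_mul (by positivity)]
          congr 1
          ring
        have h3 : ((1:ℝ) + σ ^ 2) ^ (-b) ≤ ((1:ℝ) + σ ^ 2) ^ (-(3/4) : ℝ) :=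
          Real.rpow_le_rpow_of_exponent_le (by nlinarith [sq_nonneg σ]) (by linarith)
        rw [h1, h2]
        exact ENNReal.ofReal_le_ofReal h3
      calc ∫⁻ τ, g τ ^ 2
          ≤ ∫⁻ τ, ENNReal.ofReal (((1:ℝ) + (sigL j lam m τ) ^ 2) ^ (-(3/4) : ℝ)) :=
            lintegral_mono hpt
        _ = ENNReal.ofReal CI := lintegral34_shift _
    have hBpt : ∀ τ, ENNReal.ofReal (jap ((m:ℝ)/lam) ^ (2*s)) * h τ ^ 2
        = (ENNReal.ofReal (jap ((m:ℝ)/lam) ^ s * jap (sigL j lam m τ) ^ b)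
            * f m τ) ^ 2 := by
      intro τ
      rw [hh]
      simp only []
      rw [mul_pow, mul_pow,
        ← ENNReal.ofReal_pow (Real.rpow_nonneg (jap_pos _).le _),
        ← ENNReal.ofReal_pow (mul_nonneg (Real.rpow_nonneg (jap_pos _).le _)
          (Real.rpow_nonneg (jap_pos _).le _)),
        ← mul_assoc,
        ← ENNReal.ofReal_mul (Real.rpow_nonneg (jap_pos _).le _)]
      congr 2
      rw [mul_pow, show (jap ((m:ℝ)/lam) ^ s) ^ 2 = jap ((m:ℝ)/lam) ^ (2*s) by
        rw [sq, ← Real.rpow_add (jap_pos _)]; congr 1; ring]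
    have hB : ∫⁻ τ, (ENNReal.ofReal (jap ((m:ℝ)/lam) ^ s * jap (sigL j lam m τ) ^ b)
          * f m τ) ^ 2
        = ENNReal.ofReal (jap ((m:ℝ)/lam) ^ (2*s)) * ∫⁻ τ, h τ ^ 2 := by
      rw [← lintegral_const_mul' _ _ ENNReal.ofReal_ne_top]
      exact lintegral_congr fun τ => (hBpt τ).symm
    calc ENNReal.ofReal (jap ((m:ℝ)/lam) ^ (2*s)) * (∫⁻ τ, f m τ) ^ 2
        ≤ ENNReal.ofReal (jap ((m:ℝ)/lam) ^ (2*s)) *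
            ((∫⁻ τ, g τ ^ 2) * (∫⁻ τ, h τ ^ 2)) := mul_le_mul_right hsq _
      _ ≤ ENNReal.ofReal (jap ((m:ℝ)/lam) ^ (2*s)) *
            (ENNReal.ofReal CI * ∫⁻ τ, h τ ^ 2) :=
          mul_le_mul_right (mul_le_mul_left hA _) _
      _ = ENNReal.ofReal CI *
            (ENNReal.ofReal (jap ((m:ℝ)/lam) ^ (2*s)) * ∫⁻ τ, h τ ^ 2) :=
          mul_left_comm _ _ _
      _ = ENNReal.ofReal CI *
            ∫⁻ τ, (ENNReal.ofReal (jap ((m:ℝ)/lam) ^ s * jap (sigL j lam m τ) ^ b)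
              * f m τ) ^ 2 := by rw [hB]
  unfold Yn Xn L2L
  have hsum : ∑' m : ℤ, ENNReal.ofReal (jap ((m:ℝ)/lam) ^ (2*s)) * (∫⁻ τ, f m τ) ^ 2
      ≤ ENNReal.ofReal CI * ∑' m : ℤ,
          ∫⁻ τ, (ENNReal.ofReal (jap ((m:ℝ)/lam) ^ s * jap (sigL j lam m τ) ^ b)
            * f m τ) ^ 2 := by
    rw [← ENNReal.tsum_mul_left]
    exact ENNReal.tsum_le_tsum key
  calc (ENNReal.ofReal (1/lam) *
        ∑' m : ℤ, ENNReal.ofReal (jap ((m:ℝ)/lam) ^ (2*s)) * (∫⁻ τ, f m τ) ^ 2)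
          ^ (1/2 : ℝ)
      ≤ (ENNReal.ofReal CI * (ENNReal.ofReal (1/lam) * ∑' m : ℤ,
          ∫⁻ τ, (ENNReal.ofReal (jap ((m:ℝ)/lam) ^ s * jap (sigL j lam m τ) ^ b)
            * f m τ) ^ 2)) ^ (1/2 : ℝ) := by
        refine ENNReal.rpow_le_rpow ?_ (by norm_num)
        rw [mul_left_comm]
        exact mul_le_mul_right hsum _
    _ = ENNReal.ofReal (CI ^ (1/2 : ℝ)) * (ENNReal.ofReal (1/lam) * ∑' m : ℤ,
          ∫⁻ τ, (ENNReal.ofReal (jap ((m:ℝ)/lam) ^ s * jap (sigL j lam m τ) ^ b)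
            * f m τ) ^ 2) ^ (1/2 : ℝ) := by
        rw [ENNReal.mul_rpow_of_nonneg _ _ (by norm_num : (0:ℝ) ≤ 1/2),
          ENNReal.ofReal_rpow_of_nonneg CI_nonneg (by norm_num)]
/-- **Lemma 2.5, estimate (2.06), second inequality:** `‖u‖_{Z^s} ≤ C‖u‖_{X^{s,(2j−1)/(2j)}}`. -/
theorem stmt_10 (j : ℕ) (hj : 2 ≤ j) (s : ℝ)
    (hs₁ : -(j : ℝ) + 1 / 2 ≤ s) (hs₂ : s ≤ -(j : ℝ) / 2) :
    ∃ C : ℝ, 0 < C ∧ ∀ lam : ℝ, 1 ≤ lam → ∀ f : ℤ → ℝ → ℝ≥0∞,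
      Measurable (Function.uncurry f) → (∀ τ, f 0 τ = 0) →
      Zn j lam s f ≤
        ENNReal.ofReal C * Xn j lam s ((2 * (j : ℝ) - 1) / (2 * (j : ℝ))) f := by
  have hj2 : (2:ℝ) ≤ (j:ℝ) := by exact_mod_cast hj
  have hjpos : (0:ℝ) < (j:ℝ) := by linarith
  have hjne : (j:ℝ) ≠ 0 := ne_of_gt hjpos
  have hs_neg1 : s ≤ -1 := by linarith
  set b : ℝ := (2 * (j:ℝ) - 1) / (2 * (j:ℝ)) with hbdef
  set C2 : ℝ := (2:ℝ) ^ (-(2 * (j:ℝ) * (s + 1 / (2 * (j:ℝ)))) / 2) with hC2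
  set C3a : ℝ := (2:ℝ) ^ (-((2 * (j:ℝ) + 1) * ((2 * s + 1) / (2 * (j:ℝ)))) / 2) with hC3a
  set C3b : ℝ := (2:ℝ) ^ (-s / 2) with hC3b
  set CY : ℝ := CI ^ (1/2 : ℝ) with hCY
  have hC2pos : 0 < C2 := Real.rpow_pos_of_pos (by norm_num) _
  have hC3apos : 0 < C3a := Real.rpow_pos_of_pos (by norm_num) _
  have hC3bpos : 0 < C3b := Real.rpow_pos_of_pos (by norm_num) _
  have hCYnn : 0 ≤ CY := Real.rpow_nonneg CI_nonneg _
  refine ⟨1 + C2 + (C3a + C3b) + CY, by positivity, ?_⟩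
  intro lam hlam f hfm _
  -- exponent arithmetic
  have he2 : s + 1 / (2 * (j:ℝ)) ≤ 0 := by
    have h14 : 1 / (2 * (j:ℝ)) ≤ 1/4 := by
      rw [div_le_div_iff₀ (by linarith) (by norm_num)]; linarith
    linarith
  have hps2 : (1 - 2 * (j:ℝ)) * s - 1 + 2 * (j:ℝ) * (s + 1 / (2 * (j:ℝ))) = s := by
    field_simp
    ring
  have hbe2 : s + 1 = b + (s + 1 / (2 * (j:ℝ))) := by
    rw [hbdef]; field_simp; ring
  have he3 : (2 * s + 1) / (2 * (j:ℝ)) ≤ 0 :=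
    div_nonpos_of_nonpos_of_nonneg (by linarith) (by linarith)
  have hps3 : -s / (j:ℝ) - 1 + (2 * (j:ℝ) + 1) * ((2 * s + 1) / (2 * (j:ℝ))) ≤ s := by
    have heq : -s / (j:ℝ) - 1 + (2 * (j:ℝ) + 1) * ((2 * s + 1) / (2 * (j:ℝ)))
        = s + (2 * (j:ℝ) * s + 1) / (2 * (j:ℝ)) := by
      field_simp; ring
    have hnum : 2 * (j:ℝ) * s + 1 ≤ 0 := by nlinarith
    have : (2 * (j:ℝ) * s + 1) / (2 * (j:ℝ)) ≤ 0 :=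
      div_nonpos_of_nonpos_of_nonneg hnum (by linarith)
    linarith [heq.le, heq.ge]
  have hbe3 : s / (j:ℝ) + 1 = b + (2 * s + 1) / (2 * (j:ℝ)) := by
    rw [hbdef]; field_simp; ring
  have hp4 : -s / (j:ℝ) - 1 ≤ 0 := by
    have h1 : -s ≤ (j:ℝ) := by linarith
    have : -s / (j:ℝ) ≤ 1 := by rw [div_le_one hjpos]; linarith
    linarith
  have hq4 : s / (j:ℝ) + 1 ≤ b := by
    rw [hbe3]
    have : 0 ≤ -((2 * s + 1) / (2 * (j:ℝ))) := by
      rw [← neg_div]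
      exact div_nonneg (by linarith) (by linarith)
    linarith
  -- the three X-pieces and the Y-piece
  have hX1 : Xn j lam s b (restr (D1 j lam ∪ D5 j lam) f) ≤ Xn j lam s b f :=
    Xn_restr_le_self j lam s b _ f
  have hw2 : ∀ m : ℤ, ∀ τ : ℝ, (m, τ) ∈ D2 j lam →
      jap ((m:ℝ)/lam) ^ ((1 - 2 * (j:ℝ)) * s - 1) * jap (sigL j lam m τ) ^ (s + 1)
        ≤ C2 * (jap ((m:ℝ)/lam) ^ s * jap (sigL j lam m τ) ^ b) := by
    intro m τ hD
    simp only [D2, Set.mem_setOf_eq] at hD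
    obtain ⟨h1, h2, -⟩ := hD
    have hu : 1 ≤ jap ((m:ℝ)/lam) := one_le_jap _
    have hv1 : 0 < jap (sigL j lam m τ) := jap_pos _
    have hs2p : (0:ℝ) < Real.sqrt 2 := by positivity
    have hdiv : jap ((m:ℝ)/lam) / Real.sqrt 2 ≤ |(m:ℝ)/lam| := by
      rw [div_le_iff₀ hs2p]
      calc jap ((m:ℝ)/lam) ≤ Real.sqrt 2 * |(m:ℝ)/lam| := jap_le_sqrt_two_mul h1
        _ = |(m:ℝ)/lam| * Real.sqrt 2 := mul_comm _ _
    have hv : (jap ((m:ℝ)/lam) / Real.sqrt 2) ^ (2 * (j:ℝ)) ≤ jap (sigL j lam m τ) := by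
      calc (jap ((m:ℝ)/lam) / Real.sqrt 2) ^ (2 * (j:ℝ))
          ≤ |(m:ℝ)/lam| ^ (2 * (j:ℝ)) :=
            Real.rpow_le_rpow (by positivity) hdiv (by positivity)
        _ = |(m:ℝ)/lam| ^ (2 * j) := by
            rw [← Real.rpow_natCast |(m:ℝ)/lam| (2 * j)]; congr 1; push_cast; ring
        _ ≤ 2 * (2 * (j:ℝ) + 1) / 3 * |(m:ℝ)/lam| ^ (2 * j) := by
            refine le_mul_of_one_le_left (by positivity) ?_
            rw [le_div_iff₀ (by norm_num)]; linarith
        _ ≤ |sigL j lam m τ| := h2.le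
        _ ≤ jap (sigL j lam m τ) := abs_le_jap _
    rw [hbe2, hC2]
    exact weight_trade hu hv1 hv he2 (le_of_eq hps2)
  have hX2 : Xn j lam ((1 - 2 * (j:ℝ)) * s - 1) (s + 1) (restr (D2 j lam) f)
      ≤ ENNReal.ofReal C2 * Xn j lam s b f :=
    Xn_restr_le j lam hC2pos.le _ f hw2
  have hw3 : ∀ m : ℤ, ∀ τ : ℝ, (m, τ) ∈ D3 j lam ∪ D4 j lam →
      jap ((m:ℝ)/lam) ^ (-s / (j:ℝ) - 1) * jap (sigL j lam m τ) ^ (s / (j:ℝ) + 1)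
        ≤ (C3a + C3b) * (jap ((m:ℝ)/lam) ^ s * jap (sigL j lam m τ) ^ b) := by
    intro m τ hD
    have hW : 0 ≤ jap ((m:ℝ)/lam) ^ s * jap (sigL j lam m τ) ^ b :=
      mul_nonneg (Real.rpow_nonneg (jap_pos _).le _) (Real.rpow_nonneg (jap_pos _).le _)
    rcases hD with hD | hD
    · simp only [D3, Set.mem_setOf_eq] at hD
      obtain ⟨h1, h2⟩ := hD
      have hu : 1 ≤ jap ((m:ℝ)/lam) := one_le_jap _
      have hv1 : 0 < jap (sigL j lam m τ) := jap_pos _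
      have hs2p : (0:ℝ) < Real.sqrt 2 := by positivity
      have hdiv : jap ((m:ℝ)/lam) / Real.sqrt 2 ≤ |(m:ℝ)/lam| := by
        rw [div_le_iff₀ hs2p]
        calc jap ((m:ℝ)/lam) ≤ Real.sqrt 2 * |(m:ℝ)/lam| := jap_le_sqrt_two_mul h1
          _ = |(m:ℝ)/lam| * Real.sqrt 2 := mul_comm _ _
      have hv : (jap ((m:ℝ)/lam) / Real.sqrt 2) ^ (2 * (j:ℝ) + 1)
          ≤ jap (sigL j lam m τ) := by
        calc (jap ((m:ℝ)/lam) / Real.sqrt 2) ^ (2 * (j:ℝ) + 1)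
            ≤ |(m:ℝ)/lam| ^ (2 * (j:ℝ) + 1) :=
              Real.rpow_le_rpow (by positivity) hdiv (by positivity)
          _ = |(m:ℝ)/lam| ^ (2 * j + 1) := by
              rw [← Real.rpow_natCast |(m:ℝ)/lam| (2 * j + 1)]; congr 1; push_cast; ring
          _ ≤ 2 * (2 * (j:ℝ) + 1) * |(m:ℝ)/lam| ^ (2 * j + 1) := by
              refine le_mul_of_one_le_left (by positivity) (by linarith)
          _ ≤ |sigL j lam m τ| := h2.le
          _ ≤ jap (sigL j lam m τ) := abs_le_jap _
      calc jap ((m:ℝ)/lam) ^ (-s / (j:ℝ) - 1) * jap (sigL j lam m τ) ^ (s / (j:ℝ) + 1)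
          ≤ C3a * (jap ((m:ℝ)/lam) ^ s * jap (sigL j lam m τ) ^ b) := by
            rw [hbe3, hC3a]
            exact weight_trade hu hv1 hv he3 hps3
        _ ≤ (C3a + C3b) * (jap ((m:ℝ)/lam) ^ s * jap (sigL j lam m τ) ^ b) := by
            apply mul_le_mul_of_nonneg_right _ hW
            linarith
    · simp only [D4, Set.mem_setOf_eq] at hD
      obtain ⟨-, h1, -⟩ := hD
      have hu1 : 1 ≤ jap ((m:ℝ)/lam) := one_le_jap _
      have hu2 : jap ((m:ℝ)/lam) ≤ Real.sqrt 2 := jap_le_sqrt_two h1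
      calc jap ((m:ℝ)/lam) ^ (-s / (j:ℝ) - 1) * jap (sigL j lam m τ) ^ (s / (j:ℝ) + 1)
          ≤ C3b * (jap ((m:ℝ)/lam) ^ s * jap (sigL j lam m τ) ^ b) := by
            rw [hC3b]
            exact weight_trade4 hu1 hu2 (one_le_jap _) hp4 hq4 (by linarith)
        _ ≤ (C3a + C3b) * (jap ((m:ℝ)/lam) ^ s * jap (sigL j lam m τ) ^ b) := by
            apply mul_le_mul_of_nonneg_right _ hW
            linarith
  have hX3 : Xn j lam (-s / (j:ℝ) - 1) (s / (j:ℝ) + 1) (restr (D3 j lam ∪ D4 j lam) f)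
      ≤ ENNReal.ofReal (C3a + C3b) * Xn j lam s b f :=
    Xn_restr_le j lam (by positivity) _ f hw3
  have hY : Yn lam s f ≤ ENNReal.ofReal CY * Xn j lam s b f := by
    rw [hCY]
    exact Yn_le j hj lam s f hfm
  have hsplit : ENNReal.ofReal (1 + C2 + (C3a + C3b) + CY) * Xn j lam s b f
      = ((Xn j lam s b f + ENNReal.ofReal C2 * Xn j lam s b f)
          + ENNReal.ofReal (C3a + C3b) * Xn j lam s b f)
        + ENNReal.ofReal CY * Xn j lam s b f := by
    rw [ENNReal.ofReal_add (by positivity) hCYnn,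
      ENNReal.ofReal_add (by positivity) (by positivity),
      ENNReal.ofReal_add (by norm_num) hC2pos.le,
      ENNReal.ofReal_one, add_mul, add_mul, add_mul, one_mul]
  rw [hsplit]
  unfold Zn XSn
  exact add_le_add (add_le_add (add_le_add hX1 hX2) hX3) hY

end
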